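/- If a Büchi automaton M (over alphabet {0,1}) contains no loop, in its transition graph, that is labelled entirely by 0s and no loop labelled entirely by 1s, then every string α accepted by M can be written as α = w₁w₂w₃⋯ where each finite block wᵢ has length at most |S| (the number of states of M) and each wᵢ contains both the letter 0 and the letter 1. -/
import Mathlib


/-- A Büchi automaton over the alphabet `{0,1}` with state type `Q`. -/
structure Buchi (Q : Type*) where
  init : Q
  delta : Q → Fin 2 → Q → Prop
  accept : Set Q

/-- `r` is a run of `M` on the string `α`. -/
def IsRun {Q : Type*} (M : Buchi Q) (α : ℕ → Fin 2) (r : ℕ → Q) : Prop :=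
  r 0 = M.init ∧ ∀ i, M.delta (r i) (α i) (r (i + 1))

/-- `M` accepts `α`: some run of `M` on `α` visits an accepting state infinitely often. -/
def Accepts {Q : Type*} (M : Buchi Q) (α : ℕ → Fin 2) : Prop :=
  ∃ r : ℕ → Q, IsRun M α r ∧ ∃ q ∈ M.accept, ∀ N : ℕ, ∃ i, N ≤ i ∧ r i = q

/-- `M` has a loop in its transition graph all of whose labels are `c`. -/
def HasLoop {Q : Type*} (M : Buchi Q) (c : Fin 2) : Prop :=
  ∃ (l : ℕ) (p : ℕ → Q), 1 ≤ l ∧ p 0 = p l ∧ ∀ i < l, M.delta (p i) c (p (i + 1))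

/-- If a Büchi automaton `M` has no `0`-loop and no `1`-loop, then every string
accepted by `M` can be partitioned into consecutive blocks of length at most the
number of states, each containing both letters `0` and `1`. -/
theorem no_monochromatic_loops_blocks {Q : Type*} [Fintype Q] (M : Buchi Q)
    (α : ℕ → Fin 2) (h0 : ¬ HasLoop M 0) (h1 : ¬ HasLoop M 1) (hacc : Accepts M α) :
    ∃ k : ℕ → ℕ, k 0 = 0 ∧ StrictMono k ∧ (∀ i, k (i + 1) - k i ≤ Fintype.card Q) ∧
      ∀ i, (∃ j, k i ≤ j ∧ j < k (i + 1) ∧ α j = 0) ∧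
           (∃ j, k i ≤ j ∧ j < k (i + 1) ∧ α j = 1) := by

  classical
  obtain ⟨r, hr, -⟩ := hacc
  have hQ : Nonempty Q := ⟨M.init⟩
  have hcard : 1 ≤ Fintype.card Q := Fintype.card_pos
  -- no constant window of length card Q
  have noconst : ∀ (c : Fin 2), ¬ HasLoop M c → ∀ n : ℕ,
      ¬ (∀ j, n ≤ j → j < n + Fintype.card Q → α j = c) := by
    intro c hc n hall
    obtain ⟨x, y, hxy, hf⟩ := Fintype.exists_ne_map_eq_of_card_lt
      (fun i : Fin (Fintype.card Q + 1) => r (n + i)) (by simp)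
    rcases lt_or_gt_of_ne (fun h => hxy (by exact_mod_cast Fin.ext h)) with h | h
    case inl =>
      apply hc
      refine ⟨y.val - x.val, fun i => r (n + x.val + i), by omega, ?_, ?_⟩
      · simp only [Nat.add_zero]
        have : n + x.val + (y.val - x.val) = n + y.val := by omega
        rw [this]; exact hf
      · intro i hi
        have := hr.2 (n + x.val + i)
        have hα : α (n + x.val + i) = c := hall _ (by omega) (by
          have := y.isLt; omega)
        rwa [hα] at this
    case inr =>
      apply hc
      refine ⟨x.val - y.val, fun i => r (n + y.val + i), by omega, ?_, ?_⟩
      · simp only [Nat.add_zero]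
        have : n + y.val + (x.val - y.val) = n + x.val := by omega
        rw [this]; exact hf.symm
      · intro i hi
        have := hr.2 (n + y.val + i)
        have hα : α (n + y.val + i) = c := hall _ (by omega) (by
          have := x.isLt; omega)
        rwa [hα] at this
  have h2 : ∀ v : Fin 2, v = 0 ∨ v = 1 := by decide
  have window : ∀ (c : Fin 2) (hc : ¬ HasLoop M c) (n : ℕ),
      ∃ j, n ≤ j ∧ j < n + Fintype.card Q ∧ α j ≠ c := by
    intro c hc n
    by_contra hcon
    push_neg at hcon
    exact noconst c hc n hcon
  refine ⟨fun i => i * Fintype.card Q, by simp, ?_, ?_, ?_⟩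
  · intro a b hab
    exact Nat.mul_lt_mul_of_lt_of_le hab le_rfl hcard
  · intro i
    simp [Nat.succ_mul]
  · intro i
    constructor
    · obtain ⟨j, hj1, hj2, hj3⟩ := window 1 h1 (i * Fintype.card Q)
      refine ⟨j, hj1, by show j < (i + 1) * Fintype.card Q; rw [Nat.succ_mul]; omega, ?_⟩
      rcases h2 (α j) with h | h
      · exact h
      · exact absurd h hj3
    · obtain ⟨j, hj1, hj2, hj3⟩ := window 0 h0 (i * Fintype.card Q)
      refine ⟨j, hj1, by show j < (i + 1) * Fintype.card Q; rw [Nat.succ_mul]; omega, ?_⟩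
      rcases h2 (α j) with h | h
      · exact absurd h hj3
      · exact h
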